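/- Let H be a finite group with a normal subgroup U, and let K_1, …, K_k ≤ U be distinct normal subgroups of H such that each U/K_i is a nonabelian chief factor of H. Then for each i, K_i does not contain ∩_{j≠i} K_j. -/

import Mathlib

/-- Let `H` be a finite group with a normal subgroup `U` and `K 0, …, K (k-1) ≤ U`
distinct normal subgroups of `H` such that each `U/K i` is a nonabelian chief
factor of `H`. Then no `K i` contains the intersection of the other `K j`. -/
theorem not_le_inter_of_nonabelian_chief_factors {H : Type*} [Group H] [Finite H]
    (U : Subgroup H) (hU : U.Normal) (k : ℕ) (K : Fin k → Subgroup H)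
    (hinj : Function.Injective K)
    (hKU : ∀ i, K i < U)
    (hKnormal : ∀ i, (K i).Normal)
    (hchief : ∀ i, ∀ Z : Subgroup H, Z.Normal → K i < Z → Z < U → False)
    (hnonab : ∀ i, ¬ ∀ a b : ↥U ⧸ (K i).subgroupOf U, a * b = b * a) :
    ∀ i, ¬ ((⨅ j ∈ ({i}ᶜ : Set (Fin k)), K j) ≤ K i) := by
  intro i hle
  haveI hUn := hU
  haveI hKin := hKnormal i
  set f := QuotientGroup.mk' (K i) with hf
  have hker : f.ker = K i := QuotientGroup.ker_mk' _
  have hsurj : Function.Surjective f := QuotientGroup.mk'_surjective _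
  have hcomap : ∀ A : Subgroup H, Subgroup.comap f (Subgroup.map f A) = A ⊔ K i := by
    intro A; rw [Subgroup.comap_map_eq, hker]
  -- `⁅U,U⁆ ⊔ K i = U` since `U / K i` is a nonabelian chief factor
  have hUU : ⁅U, U⁆ ⊔ K i = U := by
    have hnorm : (⁅U, U⁆ ⊔ K i).Normal := by infer_instance
    have hle2 : ⁅U, U⁆ ⊔ K i ≤ U :=
      sup_le (Subgroup.commutator_le_left U U) (hKU i).le
    rcases hle2.lt_or_eq with h | h
    · exfalso
      rcases (le_sup_right : K i ≤ ⁅U, U⁆ ⊔ K i).lt_or_eq with h' | h'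
      · exact hchief i _ hnorm h' h
      · -- then `⁅U,U⁆ ≤ K i`, so the quotient is abelian, contradiction
        have hcomm : ⁅U, U⁆ ≤ K i := h' ▸ le_sup_left
        refine hnonab i ?_
        intro a b
        induction a using QuotientGroup.induction_on with | H x => ?_
        induction b using QuotientGroup.induction_on with | H y => ?_
        rw [← QuotientGroup.mk_mul, ← QuotientGroup.mk_mul, QuotientGroup.eq,
          Subgroup.mem_subgroupOf]
        open scoped commutatorElement in
        have hmem : ⁅((y : H))⁻¹, ((x : H))⁻¹⁆ ∈ ⁅U, U⁆ :=
          Subgroup.commutator_mem_commutator (U.inv_mem y.2) (U.inv_mem x.2)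
        open scoped commutatorElement in
        have heq : ((((x * y)⁻¹ * (y * x) : U) : H)) = ⁅((y : H))⁻¹, ((x : H))⁻¹⁆ := by
          push_cast
          simp only [commutatorElement_def]
          group
        rw [heq]
        exact hcomm hmem
    · exact h
  -- pairwise: for `a ≠ i`, `K i ⊔ K a = U`
  have hpair : ∀ a, a ≠ i → K i ⊔ K a = U := by
    intro a ha
    haveI := hKnormal a
    have hnorm : (K i ⊔ K a).Normal := by infer_instance
    have h2 : K i ⊔ K a ≤ U := sup_le (hKU i).le (hKU a).le
    have hKa : ¬ K a ≤ K i := by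
      intro h
      exact hchief a (K i) (hKnormal i)
        (lt_of_le_of_ne h fun e => ha (hinj e)) (hKU i)
    have hlt : K i < K i ⊔ K a :=
      lt_of_le_of_ne le_sup_left fun e => hKa (e ▸ le_sup_right)
    rcases h2.lt_or_eq with h | h
    · exact absurd (hchief i _ hnorm hlt h) (by simp)
    · exact h
  -- key commutator fact via the quotient correspondence
  have key : ∀ A B : Subgroup H, A ⊔ K i = U → B ⊔ K i = U → ⁅A, B⁆ ⊔ K i = U := by
    intro A B hA hB
    have hUsup : U ⊔ K i = U := sup_eq_left.mpr (hKU i).le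
    have hmap : ∀ C : Subgroup H, C ⊔ K i = U → Subgroup.map f C = Subgroup.map f U := by
      intro C hC
      have hcc : Subgroup.comap f (Subgroup.map f C) = Subgroup.comap f (Subgroup.map f U) := by
        rw [hcomap, hcomap, hC, hUsup]
      calc Subgroup.map f C
          = Subgroup.map f (Subgroup.comap f (Subgroup.map f C)) :=
            (Subgroup.map_comap_eq_self_of_surjective hsurj _).symm
        _ = Subgroup.map f (Subgroup.comap f (Subgroup.map f U)) := by rw [hcc]
        _ = Subgroup.map f U := Subgroup.map_comap_eq_self_of_surjective hsurj _
    calc ⁅A, B⁆ ⊔ K i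
        = Subgroup.comap f (Subgroup.map f ⁅A, B⁆) := (hcomap _).symm
      _ = Subgroup.comap f ⁅Subgroup.map f A, Subgroup.map f B⁆ := by
          rw [Subgroup.map_commutator]
      _ = Subgroup.comap f ⁅Subgroup.map f U, Subgroup.map f U⁆ := by
          rw [hmap A hA, hmap B hB]
      _ = Subgroup.comap f (Subgroup.map f ⁅U, U⁆) := by rw [Subgroup.map_commutator]
      _ = ⁅U, U⁆ ⊔ K i := hcomap _
      _ = U := hUU
  -- normality of big infima
  have hinf_normal : ∀ s : Finset (Fin k), (⨅ j ∈ s, K j).Normal := by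
    intro s
    constructor
    intro n hn g
    simp only [Subgroup.mem_iInf] at hn ⊢
    intro j hj
    exact (hKnormal j).conj_mem n (hn j hj) g
  -- main induction
  have main : ∀ s : Finset (Fin k), i ∉ s → K i ⊔ ((⨅ j ∈ s, K j) ⊓ U) = U := by
    intro s
    induction s using Finset.induction_on with
    | empty =>
        intro _
        simp only [Finset.notMem_empty, iInf_of_empty, iInf_top, top_inf_eq]
        exact sup_eq_right.mpr (hKU i).le
    | @insert a s' ha ih =>
        intro his
        have hane : a ≠ i := fun e => his (e ▸ Finset.mem_insert_self a s')
        have ihs := ih fun h => his (Finset.mem_insert_of_mem h)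
        set B := (⨅ j ∈ s', K j) ⊓ U with hBdef
        have hA : K a ⊔ K i = U := by rw [sup_comm]; exact hpair a hane
        have hB : B ⊔ K i = U := by rw [sup_comm]; exact ihs
        have hk := key (K a) B hA hB
        haveI := hKnormal a
        have h1n := hinf_normal s'
        haveI : B.Normal :=
          ⟨fun n hn g => ⟨h1n.conj_mem n hn.1 g, hU.conj_mem n hn.2 g⟩⟩
        have h1 : ⁅K a, B⁆ ≤ K a := Subgroup.commutator_le_left _ _
        have h2 : ⁅K a, B⁆ ≤ B := Subgroup.commutator_le_right _ _
        have hcle : ⁅K a, B⁆ ≤ (⨅ j ∈ insert a s', K j) ⊓ U := by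
          refine le_inf ?_ (h2.trans inf_le_right)
          refine le_iInf fun j => le_iInf fun hj => ?_
          rcases Finset.mem_insert.mp hj with rfl | hj'
          · exact h1
          · exact (h2.trans inf_le_left).trans (iInf_le_of_le j (iInf_le _ hj'))
        refine le_antisymm (sup_le (hKU i).le inf_le_right) ?_
        calc U = ⁅K a, B⁆ ⊔ K i := hk.symm
          _ ≤ ((⨅ j ∈ insert a s', K j) ⊓ U) ⊔ K i := sup_le_sup_right hcle _
          _ = K i ⊔ ((⨅ j ∈ insert a s', K j) ⊓ U) := sup_comm _ _
  have hmain := main ({i}ᶜ : Finset (Fin k)) (by simp)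
  have hfin_le : (⨅ j ∈ ({i}ᶜ : Finset (Fin k)), K j) ≤ ⨅ j ∈ ({i}ᶜ : Set (Fin k)), K j := by
    refine le_iInf fun j => le_iInf fun hj => ?_
    exact iInf_le_of_le j (iInf_le _ (by simpa using hj))
  have : U ≤ K i := by
    rw [← hmain]
    exact sup_le le_rfl ((inf_le_left.trans hfin_le).trans hle)
  exact absurd this (hKU i).not_ge
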